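/- Let ε > 0 and let f_ε(r) = arctan(r/ε²) + (arctan ε)·r/ε for r ∈ [0, ε]. Then for every r ∈ [0, ε): cos(f_ε(r))/f_ε'(r) < ε − r·sin(f_ε(r)). -/

import Mathlib

open MeasureTheory Filter Topology Real

/-- The zenith-angle function `f_ε(r) = arctan(r/ε²) + (arctan ε)·r/ε`. -/
noncomputable def fe (ε r : ℝ) : ℝ := Real.arctan (r / ε ^ 2) + Real.arctan ε * r / ε

/-- Its derivative `f_ε'(r) = ε²/(ε⁴ + r²) + (arctan ε)/ε`. -/
noncomputable def fder (ε r : ℝ) : ℝ := ε ^ 2 / (ε ^ 4 + r ^ 2) + Real.arctan ε / ε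

section aux

variable {ε : ℝ}

lemma denom_pos (hε : 0 < ε) (x : ℝ) : 0 < ε ^ 4 + x ^ 2 := by positivity

lemma fder_pos (hε : 0 < ε) (x : ℝ) : 0 < fder ε x := by
  have h1 : 0 < ε ^ 2 / (ε ^ 4 + x ^ 2) := by positivity
  have h2 : 0 < Real.arctan ε := by
    have := Real.arctan_strictMono hε
    simpa using this
  have h3 : 0 < Real.arctan ε / ε := by positivity
  unfold fder; linarith

lemma hasDerivAt_fe (hε : 0 < ε) (x : ℝ) : HasDerivAt (fe ε) (fder ε x) x := by
  have h1 : HasDerivAt (fun y : ℝ => y / ε ^ 2) (1 / ε ^ 2) x := by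
    simpa using (hasDerivAt_id x).div_const (ε ^ 2)
  have h2 : HasDerivAt (fun y : ℝ => Real.arctan (y / ε ^ 2))
      (1 / (1 + (x / ε ^ 2) ^ 2) * (1 / ε ^ 2)) x :=
    HasDerivAt.comp (h₂ := Real.arctan) x (Real.hasDerivAt_arctan (x / ε ^ 2)) h1
  have h3 : HasDerivAt (fun y : ℝ => Real.arctan ε * y / ε) (Real.arctan ε / ε) x := by
    simpa using ((hasDerivAt_id x).const_mul (Real.arctan ε)).div_const ε
  have h4 := h2.add h3
  have hfe : fe ε = fun y => Real.arctan (y / ε ^ 2) + Real.arctan ε * y / ε := rfl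
  rw [hfe]
  refine h4.congr_deriv ?_
  have hd := denom_pos hε x
  unfold fder
  field_simp

lemma hasDerivAt_fder (hε : 0 < ε) (x : ℝ) :
    HasDerivAt (fder ε) (-(ε ^ 2 * (2 * x)) / (ε ^ 4 + x ^ 2) ^ 2) x := by
  have hd := (denom_pos hε x).ne'
  have h1 : HasDerivAt (fun y : ℝ => ε ^ 4 + y ^ 2) (2 * x) x := by
    simpa using (hasDerivAt_pow 2 x).const_add (ε ^ 4)
  have h2 := (hasDerivAt_const x (ε ^ 2)).div h1 hd
  have h3 := h2.add_const (Real.arctan ε / ε)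
  have : (0 * (ε ^ 4 + x ^ 2) - ε ^ 2 * (2 * x)) / (ε ^ 4 + x ^ 2) ^ 2
      = -(ε ^ 2 * (2 * x)) / (ε ^ 4 + x ^ 2) ^ 2 := by ring
  rw [show fder ε = fun y => ε ^ 2 / (ε ^ 4 + y ^ 2) + Real.arctan ε / ε from rfl]
  simpa [fder, this] using h3

lemma fe_strictMono (hε : 0 < ε) : StrictMono (fe ε) := by
  apply strictMono_of_deriv_pos
  intro x
  rw [(hasDerivAt_fe hε x).deriv]
  exact fder_pos hε x

lemma fe_zero : fe ε 0 = 0 := by simp [fe]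

lemma fe_eps (hε : 0 < ε) : fe ε ε = Real.pi / 2 := by
  have h1 : ε / ε ^ 2 = ε⁻¹ := by field_simp
  have h2 : Real.arctan ε * ε / ε = Real.arctan ε := by field_simp
  rw [fe, h1, h2, Real.arctan_inv_of_pos hε]; ring

lemma fe_mem (hε : 0 < ε) {r : ℝ} (hr : r ∈ Set.Ico (0 : ℝ) ε) :
    0 ≤ fe ε r ∧ fe ε r < Real.pi / 2 := by
  constructor
  · have := (fe_strictMono hε).monotone hr.1
    rwa [fe_zero] at this
  · have := fe_strictMono hε hr.2
    rwa [fe_eps hε] at this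

end aux

/-- for `ε > 0` and every `r ∈ [0, ε)`,
`cos(f_ε(r))/f_ε'(r) < ε − r·sin(f_ε(r))`.
(In terms of the inverse `g_ε` of `f_ε`: `g_ε'(φ)·cos φ < ε − g_ε(φ)·sin φ` on `[0, π/2)`.) -/
theorem gprime_cos_lt (ε : ℝ) (hε : 0 < ε) :
    ∀ r ∈ Set.Ico (0 : ℝ) ε,
      Real.cos (fe ε r) / fder ε r < ε - r * Real.sin (fe ε r) := by
  intro r hr
  set Φ : ℝ → ℝ := fun x => fder ε x * (ε - x * Real.sin (fe ε x)) - Real.cos (fe ε x) with hΦ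
  -- derivative of Φ
  have hΦderiv : ∀ x : ℝ, HasDerivAt Φ
      (-(ε ^ 2 * (2 * x)) / (ε ^ 4 + x ^ 2) ^ 2 * (ε - x * Real.sin (fe ε x))
        - x * fder ε x ^ 2 * Real.cos (fe ε x)) x := by
    intro x
    have hf := hasDerivAt_fe hε x
    have hf' := hasDerivAt_fder hε x
    have hsin : HasDerivAt (fun y => Real.sin (fe ε y)) (Real.cos (fe ε x) * fder ε x) x :=
      (Real.hasDerivAt_sin (fe ε x)).comp x hf
    have hcos : HasDerivAt (fun y => Real.cos (fe ε y)) (-Real.sin (fe ε x) * fder ε x) x :=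
      (Real.hasDerivAt_cos (fe ε x)).comp x hf
    have hxs : HasDerivAt (fun y => y * Real.sin (fe ε y))
        (1 * Real.sin (fe ε x) + x * (Real.cos (fe ε x) * fder ε x)) x :=
      (hasDerivAt_id x).mul hsin
    have hin : HasDerivAt (fun y => ε - y * Real.sin (fe ε y))
        (-(1 * Real.sin (fe ε x) + x * (Real.cos (fe ε x) * fder ε x))) x :=
      hxs.const_sub ε
    have hmul := hf'.mul hin
    have := hmul.sub hcos
    refine this.congr_deriv ?_
    ring
  -- Φ is strictly antitone on [0, ε]
  have hanti : StrictAntiOn Φ (Set.Icc 0 ε) := by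
    apply strictAntiOn_of_deriv_neg (convex_Icc 0 ε)
    · exact fun x _ => ((hΦderiv x).continuousAt).continuousWithinAt
    · intro x hx
      rw [interior_Icc] at hx
      rw [(hΦderiv x).deriv]
      have hxmem : x ∈ Set.Ico (0 : ℝ) ε := ⟨le_of_lt hx.1, hx.2⟩
      obtain ⟨hfe0, hfelt⟩ := fe_mem hε hxmem
      have hcospos : 0 < Real.cos (fe ε x) :=
        Real.cos_pos_of_mem_Ioo ⟨by linarith [Real.pi_pos], hfelt⟩
      have hsinle : Real.sin (fe ε x) ≤ 1 := Real.sin_le_one _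
      have hrest : 0 < ε - x * Real.sin (fe ε x) := by
        have hle : x * Real.sin (fe ε x) ≤ x := mul_le_of_le_one_right (le_of_lt hx.1) hsinle
        linarith [hx.2]
      have h1 : -(ε ^ 2 * (2 * x)) / (ε ^ 4 + x ^ 2) ^ 2 < 0 := by
        apply div_neg_of_neg_of_pos
        · have : 0 < ε ^ 2 * (2 * x) := mul_pos (pow_pos hε 2) (by linarith [hx.1])
          linarith
        · positivity
      have h2 : 0 < x * fder ε x ^ 2 * Real.cos (fe ε x) :=
        mul_pos (mul_pos hx.1 (pow_pos (fder_pos hε x) 2)) hcospos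
      nlinarith [mul_neg_of_neg_of_pos h1 hrest]
  -- conclude
  have hΦε : Φ ε = 0 := by
    simp only [hΦ, fe_eps hε, Real.sin_pi_div_two, Real.cos_pi_div_two]
    ring
  have hΦr : 0 < Φ r := by
    have := hanti (Set.mem_Icc.mpr ⟨hr.1, le_of_lt hr.2⟩)
      (Set.mem_Icc.mpr ⟨le_of_lt hε, le_refl ε⟩) hr.2
    rwa [hΦε] at this
  have hfpos := fder_pos hε r
  rw [div_lt_iff₀ hfpos]
  simp only [hΦ] at hΦr
  nlinarith
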